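/- Let P = (1−α)I + α v eᵀ with v > 0 a probability vector and α ∈ (0, min_i 1/(1−v_i)], and let D be a nonscalar positive diagonal n×n matrix. Then r(P²D) < r(PD) if and only if E_H(τ_i(P)) > 1 + 1/(n−1); r(P²D) = r(PD) if and only if E_H(τ_i(P)) = 1 + 1/(n−1); and r(P²D) > r(PD) if and only if 1 ≤ E_H(τ_i(P)) < 1 + 1/(n−1). -/

import Mathlib

open Matrix Polynomial

noncomputable def specRad {ι : Type*} [Fintype ι] [DecidableEq ι]
    (A : Matrix ι ι ℝ) : ℝ :=
  sSup (abs '' spectrum ℝ A)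

def IsIrred {n : ℕ} (A : Matrix (Fin n) (Fin n) ℝ) : Prop :=
  ∀ i j, ∃ t : ℕ, 0 < (A ^ (t + 1)) i j

def Symmetrizable {n : ℕ} (A : Matrix (Fin n) (Fin n) ℝ) : Prop :=
  ∃ (dL dR : Fin n → ℝ) (S : Matrix (Fin n) (Fin n) ℝ),
    (∀ i, 0 < dL i) ∧ (∀ i, 0 < dR i) ∧ S.IsSymm ∧
      A = Matrix.diagonal dL * S * Matrix.diagonal dR

namespace Stmt18Aux

variable {n : ℕ}

lemma star_eq_transpose (U : Matrix (Fin n) (Fin n) ℝ) : star U = Uᵀ := by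
  ext i j
  simp [Matrix.star_apply]

lemma spectrum_eq_range {A : Matrix (Fin n) (Fin n) ℝ} (hA : A.IsHermitian) :
    spectrum ℝ A = Set.range hA.eigenvalues := by
  ext μ
  simp only [Set.mem_range]
  constructor
  · intro hμ
    rw [spectrum.mem_iff] at hμ
    have hdet : (algebraMap ℝ (Matrix (Fin n) (Fin n) ℝ) μ - A).det = 0 := by
      by_contra h
      exact hμ ((Matrix.isUnit_iff_isUnit_det _).mpr (isUnit_iff_ne_zero.mpr h))
    set U := (hA.eigenvectorUnitary : Matrix (Fin n) (Fin n) ℝ) with hUdef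
    have hU1 : U * star U = 1 := (Matrix.mem_unitaryGroup_iff).mp hA.eigenvectorUnitary.2
    have hofReal : (RCLike.ofReal ∘ hA.eigenvalues : Fin n → ℝ) = hA.eigenvalues := by
      funext i
      simp
    have key : algebraMap ℝ (Matrix (Fin n) (Fin n) ℝ) μ - A
        = U * (algebraMap ℝ (Matrix (Fin n) (Fin n) ℝ) μ - Matrix.diagonal hA.eigenvalues)
          * star U := by
      rw [Matrix.mul_sub, Matrix.sub_mul]
      congr 1
      · rw [Algebra.algebraMap_eq_smul_one, Matrix.mul_smul, mul_one,
          Matrix.smul_mul, hU1]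
      · conv_lhs => rw [hA.spectral_theorem, Unitary.conjStarAlgAut_apply]
        rfl
    rw [key, Matrix.det_mul, Matrix.det_mul] at hdet
    have hUU : U.det * (star U).det = 1 := by
      rw [← Matrix.det_mul, hU1, Matrix.det_one]
    set X := algebraMap ℝ (Matrix (Fin n) (Fin n) ℝ) μ - Matrix.diagonal hA.eigenvalues with hX
    have hXdet : X.det = 0 := by
      have h2 : X.det = U.det * X.det * (star U).det := by
        linear_combination (-X.det) * hUU
      rw [h2, hdet]
    have hXd : X = Matrix.diagonal (fun i => μ - hA.eigenvalues i) := by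
      rw [hX, Algebra.algebraMap_eq_smul_one, Matrix.smul_one_eq_diagonal,
        Matrix.diagonal_sub]
    rw [hXd, Matrix.det_diagonal] at hXdet
    obtain ⟨i, _, hi⟩ := Finset.prod_eq_zero_iff.mp hXdet
    exact ⟨i, by linarith [sub_eq_zero.mp hi]⟩
  · rintro ⟨i, rfl⟩
    exact hA.eigenvalues_mem_spectrum_real i

lemma finuniv_nonempty (hn : 0 < n) : (Finset.univ : Finset (Fin n)).Nonempty :=
  ⟨⟨0, hn⟩, Finset.mem_univ _⟩

noncomputable def lmax (hn : 0 < n) {A : Matrix (Fin n) (Fin n) ℝ} (hA : A.IsHermitian) : ℝ :=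
  Finset.univ.sup' (finuniv_nonempty hn) hA.eigenvalues

lemma eig_le_lmax (hn : 0 < n) {A : Matrix (Fin n) (Fin n) ℝ} (hA : A.IsHermitian) (k : Fin n) :
    hA.eigenvalues k ≤ lmax hn hA :=
  Finset.le_sup' _ (Finset.mem_univ k)

lemma exists_eig_eq_lmax (hn : 0 < n) {A : Matrix (Fin n) (Fin n) ℝ} (hA : A.IsHermitian) :
    ∃ k, hA.eigenvalues k = lmax hn hA := by
  obtain ⟨k, _, hk⟩ := Finset.exists_mem_eq_sup' (finuniv_nonempty hn) hA.eigenvalues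
  exact ⟨k, hk.symm⟩

lemma specRad_eq_lmax (hn : 0 < n) {A : Matrix (Fin n) (Fin n) ℝ} (hA : A.IsHermitian)
    (h : ∀ k, |hA.eigenvalues k| ≤ lmax hn hA) : specRad A = lmax hn hA := by
  unfold specRad
  rw [spectrum_eq_range hA, ← Set.range_comp]
  have h1 : Set.range (abs ∘ hA.eigenvalues)
      = (fun k => |hA.eigenvalues k|) '' (Finset.univ : Finset (Fin n)) := by
    rw [Finset.coe_univ, Set.image_univ]
    rfl
  rw [h1, ← Finset.sup'_eq_csSup_image _ (finuniv_nonempty hn)]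
  apply le_antisymm
  · exact Finset.sup'_le _ _ fun k _ => h k
  · obtain ⟨k, hk⟩ := exists_eig_eq_lmax hn hA
    calc lmax hn hA = hA.eigenvalues k := hk.symm
    _ ≤ |hA.eigenvalues k| := le_abs_self _
    _ ≤ _ := Finset.le_sup' (fun k => |hA.eigenvalues k|) (Finset.mem_univ k)


lemma key_decomp {A : Matrix (Fin n) (Fin n) ℝ} (hA : A.IsHermitian) (x : Fin n → ℝ) :
    ∃ y : Fin n → ℝ,
      x ⬝ᵥ x = ∑ j, y j ^ 2 ∧
      x ⬝ᵥ (A *ᵥ x) = ∑ j, hA.eigenvalues j * y j ^ 2 ∧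
      (∀ lm : ℝ, (∀ j, (lm - hA.eigenvalues j) * y j = 0) → A *ᵥ x = lm • x) := by
  set U := (hA.eigenvectorUnitary : Matrix (Fin n) (Fin n) ℝ) with hUdef
  have hU1 : U * star U = 1 := (Matrix.mem_unitaryGroup_iff).mp hA.eigenvectorUnitary.2
  have hU2 : star U * U = 1 := (Matrix.mem_unitaryGroup_iff').mp hA.eigenvectorUnitary.2
  have hofReal : (RCLike.ofReal ∘ hA.eigenvalues : Fin n → ℝ) = hA.eigenvalues := by
    funext i; simp
  set y := star U *ᵥ x with hy
  have hxUy : x = U *ᵥ y := by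
    rw [hy, Matrix.mulVec_mulVec, hU1, Matrix.one_mulVec]
  have hUyUy : ∀ z w : Fin n → ℝ, (U *ᵥ z) ⬝ᵥ (U *ᵥ w) = z ⬝ᵥ w := by
    intro z w
    rw [Matrix.dotProduct_mulVec, ← Matrix.mulVec_transpose, ← star_eq_transpose,
      Matrix.mulVec_mulVec, hU2, Matrix.one_mulVec]
  have hdiag : (Matrix.diagonal hA.eigenvalues *ᵥ y) = (fun j => hA.eigenvalues j * y j) :=
    funext fun j => Matrix.mulVec_diagonal _ _ _
  have hAx : A *ᵥ x = U *ᵥ (fun j => hA.eigenvalues j * y j) := by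
    conv_lhs => rw [hA.spectral_theorem, Unitary.conjStarAlgAut_apply, hofReal]
    rw [← Matrix.mulVec_mulVec, ← Matrix.mulVec_mulVec, ← hy, hdiag]
  refine ⟨y, ?_, ?_, ?_⟩
  · conv_lhs => rw [hxUy]
    rw [hUyUy]
    simp [dotProduct, sq]
  · calc x ⬝ᵥ (A *ᵥ x) = (U *ᵥ y) ⬝ᵥ (U *ᵥ fun j => hA.eigenvalues j * y j) := by
          rw [← hxUy, ← hAx]
      _ = y ⬝ᵥ (fun j => hA.eigenvalues j * y j) := hUyUy _ _
      _ = ∑ j, hA.eigenvalues j * y j ^ 2 := by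
          simp only [dotProduct]
          exact Finset.sum_congr rfl fun j _ => by ring
  · intro lm hlm
    rw [hAx]
    conv_rhs => rw [hxUy, ← Matrix.mulVec_smul]
    have harg : (fun j => hA.eigenvalues j * y j) = lm • y := by
      funext j
      show hA.eigenvalues j * y j = lm * y j
      linear_combination -(hlm j)
    rw [harg]

section derived
variable {A : Matrix (Fin n) (Fin n) ℝ} (hA : A.IsHermitian)

lemma quad_le_lmax (hn : 0 < n) (x : Fin n → ℝ) :
    x ⬝ᵥ (A *ᵥ x) ≤ lmax hn hA * (x ⬝ᵥ x) := by
  obtain ⟨y, h1, h2, _⟩ := key_decomp hA x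
  rw [h1, h2, Finset.mul_sum]
  apply Finset.sum_le_sum
  intro j _
  have := eig_le_lmax hn hA j
  nlinarith [sq_nonneg (y j)]

lemma quad_maximizer (hn : 0 < n) (x : Fin n → ℝ)
    (hx : x ⬝ᵥ (A *ᵥ x) = lmax hn hA * (x ⬝ᵥ x)) : A *ᵥ x = lmax hn hA • x := by
  obtain ⟨y, h1, h2, h3⟩ := key_decomp hA x
  apply h3
  have hsum : ∑ j, (lmax hn hA - hA.eigenvalues j) * y j ^ 2 = 0 := by
    have e1 : ∑ j, (lmax hn hA - hA.eigenvalues j) * y j ^ 2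
        = lmax hn hA * (x ⬝ᵥ x) - x ⬝ᵥ (A *ᵥ x) := by
      rw [h1, h2, Finset.mul_sum, ← Finset.sum_sub_distrib]
      apply Finset.sum_congr rfl
      intro j _
      ring
    rw [e1, hx, sub_self]
  have hterm : ∀ j ∈ Finset.univ, (lmax hn hA - hA.eigenvalues j) * y j ^ 2 = 0 :=
    (Finset.sum_eq_zero_iff_of_nonneg (fun j _ => by
      have := eig_le_lmax hn hA j
      have h0 : 0 ≤ lmax hn hA - hA.eigenvalues j := by linarith
      positivity)).mp hsum
  intro j
  have h := hterm j (Finset.mem_univ j)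
  rcases mul_eq_zero.mp h with h' | h'
  · rw [h', zero_mul]
  · rw [pow_eq_zero_iff (by norm_num) |>.mp h', mul_zero]

lemma eigenvec_k (k : Fin n) :
    ∃ x : Fin n → ℝ, x ⬝ᵥ x = 1 ∧ A *ᵥ x = hA.eigenvalues k • x := by
  set U := (hA.eigenvectorUnitary : Matrix (Fin n) (Fin n) ℝ) with hUdef
  have hU2 : star U * U = 1 := (Matrix.mem_unitaryGroup_iff').mp hA.eigenvectorUnitary.2
  refine ⟨fun j => U j k, ?_, ?_⟩
  · have := congrFun (congrFun hU2 k) k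
    rw [Matrix.mul_apply, Matrix.one_apply_eq] at this
    rw [← this]
    apply Finset.sum_congr rfl
    intro j _
    rw [Matrix.star_apply, star_trivial]
  · have hx : (fun j => U j k) = ⇑(hA.eigenvectorBasis k) := by
      funext j
      exact hA.eigenvectorUnitary_apply j k
    rw [hx]
    exact hA.mulVec_eigenvectorBasis k

lemma eig_nonneg_of_quad (hq : ∀ x : Fin n → ℝ, 0 ≤ x ⬝ᵥ (A *ᵥ x)) (k : Fin n) :
    0 ≤ hA.eigenvalues k := by
  obtain ⟨x, hx1, hx2⟩ := eigenvec_k hA k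
  have := hq x
  rw [hx2, dotProduct_smul, smul_eq_mul, hx1, mul_one] at this
  exact this

lemma quad_eigen_eq (k : Fin n) :
    ∃ x : Fin n → ℝ, x ⬝ᵥ x = 1 ∧ A *ᵥ x = hA.eigenvalues k • x ∧
      x ⬝ᵥ (A *ᵥ x) = hA.eigenvalues k := by
  obtain ⟨x, hx1, hx2⟩ := eigenvec_k hA k
  exact ⟨x, hx1, hx2, by rw [hx2, dotProduct_smul, smul_eq_mul, hx1, mul_one]⟩

lemma abs_eig_le_lmax_of_nonneg (hn : 0 < n) (h0 : ∀ i j, 0 ≤ A i j) (k : Fin n) :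
    |hA.eigenvalues k| ≤ lmax hn hA := by
  obtain ⟨x, hx1, _, hx3⟩ := quad_eigen_eq hA k
  have key : |x ⬝ᵥ (A *ᵥ x)| ≤ (fun i => |x i|) ⬝ᵥ (A *ᵥ fun i => |x i|) := by
    have hdp : x ⬝ᵥ (A *ᵥ x) = ∑ i, x i * (A *ᵥ x) i := rfl
    calc |x ⬝ᵥ (A *ᵥ x)| ≤ ∑ i, |x i * (A *ᵥ x) i| := by
          rw [hdp]; exact Finset.abs_sum_le_sum_abs _ _
    _ ≤ ∑ i, |x i| * (A *ᵥ fun i => |x i|) i := by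
        apply Finset.sum_le_sum
        intro i _
        rw [abs_mul]
        apply mul_le_mul_of_nonneg_left _ (abs_nonneg _)
        have hAxi : (A *ᵥ x) i = ∑ j, A i j * x j := rfl
        calc |(A *ᵥ x) i| ≤ ∑ j, |A i j * x j| := by
              rw [hAxi]; exact Finset.abs_sum_le_sum_abs _ _
        _ = ∑ j, A i j * |x j| := by
            apply Finset.sum_congr rfl
            intro j _
            rw [abs_mul, abs_of_nonneg (h0 i j)]
        _ = (A *ᵥ fun i => |x i|) i := rfl
    _ = _ := rfl
  have habs : (fun i => |x i|) ⬝ᵥ (fun i => |x i|) = 1 := by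
    rw [← hx1]
    apply Finset.sum_congr rfl
    intro i _
    rw [← abs_mul, abs_mul_self]
  calc |hA.eigenvalues k| = |x ⬝ᵥ (A *ᵥ x)| := by rw [hx3]
  _ ≤ (fun i => |x i|) ⬝ᵥ (A *ᵥ fun i => |x i|) := key
  _ ≤ lmax hn hA * ((fun i => |x i|) ⬝ᵥ (fun i => |x i|)) := quad_le_lmax hA hn _
  _ = lmax hn hA := by rw [habs, mul_one]

lemma specRad_of_nonneg_entries (hn : 0 < n) (h0 : ∀ i j, 0 ≤ A i j) :
    specRad A = lmax hn hA :=
  specRad_eq_lmax hn hA (abs_eig_le_lmax_of_nonneg hA hn h0)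

lemma specRad_of_psd (hn : 0 < n) (hq : ∀ x : Fin n → ℝ, 0 ≤ x ⬝ᵥ (A *ᵥ x)) :
    specRad A = lmax hn hA := by
  apply specRad_eq_lmax hn hA
  intro k
  rw [abs_of_nonneg (eig_nonneg_of_quad hA hq k)]
  exact eig_le_lmax hn hA k

lemma lmax_eigenvec (hn : 0 < n) :
    ∃ x : Fin n → ℝ, x ⬝ᵥ x = 1 ∧ A *ᵥ x = lmax hn hA • x ∧
      x ⬝ᵥ (A *ᵥ x) = lmax hn hA := by
  obtain ⟨k, hk⟩ := exists_eig_eq_lmax hn hA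
  obtain ⟨x, hx1, hx2, hx3⟩ := quad_eigen_eq hA k
  exact ⟨x, hx1, by rw [← hk]; exact hx2, by rw [← hk]; exact hx3⟩

end derived

section concrete

def Mmat (d u : Fin n → ℝ) (σ : ℝ) : Matrix (Fin n) (Fin n) ℝ :=
  Matrix.of fun i j => (if i = j then σ * d i else 0) + (1 - σ) * (u i * u j)

lemma Mmat_herm (d u : Fin n → ℝ) (σ : ℝ) : (Mmat d u σ).IsHermitian := by
  unfold Matrix.IsHermitian
  ext i j
  rw [Matrix.conjTranspose_apply, star_trivial]
  show (if j = i then σ * d j else 0) + (1 - σ) * (u j * u i)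
    = (if i = j then σ * d i else 0) + (1 - σ) * (u i * u j)
  rcases eq_or_ne i j with h | h
  · subst h; ring
  · rw [if_neg h, if_neg (Ne.symm h)]; ring

lemma mulVecM (d u : Fin n → ℝ) (σ : ℝ) (x : Fin n → ℝ) (i : Fin n) :
    (Mmat d u σ *ᵥ x) i = σ * d i * x i + (1 - σ) * (∑ j, u j * x j) * u i := by
  have h0 : (Mmat d u σ *ᵥ x) i
      = ∑ j, ((if i = j then σ * d i else 0) + (1 - σ) * (u i * u j)) * x j := rfl
  rw [h0]
  have h1 : ∀ j, ((if i = j then σ * d i else 0) + (1 - σ) * (u i * u j)) * x j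
      = (if i = j then σ * d i * x j else 0) + ((1 - σ) * u i) * (u j * x j) := by
    intro j
    rcases eq_or_ne i j with h | h
    · rw [if_pos h, if_pos h]; ring
    · rw [if_neg h, if_neg h]; ring
  simp_rw [h1]
  rw [Finset.sum_add_distrib, Finset.sum_ite_eq, if_pos (Finset.mem_univ i),
    ← Finset.mul_sum]
  ring

lemma quadM (d u : Fin n → ℝ) (σ : ℝ) (x : Fin n → ℝ) :
    x ⬝ᵥ (Mmat d u σ *ᵥ x)
      = σ * (∑ i, d i * x i ^ 2) + (1 - σ) * (∑ j, u j * x j) ^ 2 := by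
  have h0 : x ⬝ᵥ (Mmat d u σ *ᵥ x) = ∑ i, x i * (Mmat d u σ *ᵥ x) i := rfl
  rw [h0]
  have h1 : ∀ i, x i * (Mmat d u σ *ᵥ x) i
      = σ * (d i * x i ^ 2) + ((1 - σ) * (∑ j, u j * x j)) * (u i * x i) := by
    intro i
    rw [mulVecM]
    ring
  simp_rw [h1]
  rw [Finset.sum_add_distrib, ← Finset.mul_sum, ← Finset.mul_sum]
  have h2 : ∑ i, u i * x i = ∑ i, u i * x i := rfl
  ring

end concrete

section core

variable {v d u : Fin n → ℝ}

lemma cs1 (hv : ∀ i, 0 ≤ v i) (hv1 : ∑ i, v i = 1) (hd : ∀ i, 0 ≤ d i)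
    (hu : ∀ i, u i = Real.sqrt (v i) * Real.sqrt (d i)) (x : Fin n → ℝ) :
    (∑ j, u j * x j) ^ 2 ≤ ∑ i, d i * x i ^ 2 := by
  have h := Finset.sum_mul_sq_le_sq_mul_sq Finset.univ
    (fun i => Real.sqrt (v i)) (fun i => Real.sqrt (d i) * x i)
  have e1 : ∑ i, Real.sqrt (v i) * (Real.sqrt (d i) * x i) = ∑ j, u j * x j := by
    apply Finset.sum_congr rfl
    intro i _
    rw [hu i]; ring
  have e2 : ∑ i, Real.sqrt (v i) ^ 2 = 1 := by
    rw [← hv1]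
    exact Finset.sum_congr rfl fun i _ => Real.sq_sqrt (hv i)
  have e3 : ∑ i, (Real.sqrt (d i) * x i) ^ 2 = ∑ i, d i * x i ^ 2 := by
    apply Finset.sum_congr rfl
    intro i _
    rw [mul_pow, Real.sq_sqrt (hd i)]
  rw [e1, e2, e3, one_mul] at h
  exact h

lemma cs2 (x : Fin n → ℝ) :
    (∑ j, u j * x j) ^ 2 ≤ (∑ i, u i ^ 2) * (∑ i, x i ^ 2) :=
  Finset.sum_mul_sq_le_sq_mul_sq Finset.univ u x

lemma usq (hv : ∀ i, 0 ≤ v i) (hd : ∀ i, 0 ≤ d i)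
    (hu : ∀ i, u i = Real.sqrt (v i) * Real.sqrt (d i)) (i : Fin n) :
    u i ^ 2 = v i * d i := by
  rw [hu i, mul_pow, Real.sq_sqrt (hv i), Real.sq_sqrt (hd i)]

/-- Case α < 1 : `specRad (M t²) < specRad (M t)` for `t = 1 - α ∈ (0,1)`. -/
theorem case_pos (hn : 0 < n) (t : ℝ) (ht0 : 0 < t) (ht1 : t < 1)
    (hv : ∀ i, 0 < v i) (hv1 : ∑ i, v i = 1) (hd : ∀ i, 0 < d i)
    (hu : ∀ i, u i = Real.sqrt (v i) * Real.sqrt (d i))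
    (hdnc : ∃ i j, d i ≠ d j) :
    specRad (Mmat d u (t ^ 2)) < specRad (Mmat d u t) := by
  have h1 := Mmat_herm d u t
  have h2 := Mmat_herm d u (t ^ 2)
  set lm1 := lmax hn h1 with hlm1
  set lm2 := lmax hn h2 with hlm2
  set c := ∑ i, v i * d i with hc
  have husq : ∀ i, u i ^ 2 = v i * d i := usq (fun i => (hv i).le) (fun i => (hd i).le) hu
  have hc0 : 0 < c := Finset.sum_pos (fun i _ => mul_pos (hv i) (hd i)) (finuniv_nonempty hn)
  -- strict Cauchy–Schwarz : c^2 < ∑ v i * d i ^ 2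
  have hdc : ∃ i, d i ≠ c := by
    by_contra hcon
    push_neg at hcon
    obtain ⟨i, j, hij⟩ := hdnc
    exact hij (by rw [hcon i, hcon j])
  have hstrict : c ^ 2 < ∑ i, v i * d i ^ 2 := by
    have hpos : 0 < ∑ i, v i * (d i - c) ^ 2 := by
      obtain ⟨i0, hi0⟩ := hdc
      apply Finset.sum_pos' (fun i _ => mul_nonneg (hv i).le (sq_nonneg _))
      refine ⟨i0, Finset.mem_univ i0, mul_pos (hv i0) ?_⟩
      have hne : d i0 - c ≠ 0 := sub_ne_zero.mpr hi0
      exact lt_of_le_of_ne (sq_nonneg _) (Ne.symm (pow_ne_zero 2 hne))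
    have hexp : ∑ i, v i * (d i - c) ^ 2
        = (∑ i, v i * d i ^ 2) - 2 * c * c + c ^ 2 * 1 := by
      have e : ∀ i, v i * (d i - c) ^ 2
          = v i * d i ^ 2 - 2 * c * (v i * d i) + c ^ 2 * v i := fun i => by ring
      simp_rw [e]
      rw [Finset.sum_add_distrib, Finset.sum_sub_distrib, ← Finset.mul_sum, ← Finset.mul_sum,
        ← hc, hv1]
    nlinarith
  -- c < lm1
  have hqu : u ⬝ᵥ (Mmat d u t *ᵥ u) = t * (∑ i, v i * d i ^ 2) + (1 - t) * c ^ 2 := by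
    rw [quadM]
    have e1 : ∑ i, d i * u i ^ 2 = ∑ i, v i * d i ^ 2 := by
      apply Finset.sum_congr rfl
      intro i _
      rw [husq i]; ring
    have e2 : ∑ j, u j * u j = c := by
      rw [hc]
      exact Finset.sum_congr rfl fun i _ => by rw [← husq i]; ring
    rw [e1, e2]
  have huu : u ⬝ᵥ u = c := by
    show ∑ j, u j * u j = c
    exact Finset.sum_congr rfl fun i _ => by rw [← husq i]; ring
  have hclm1 : c < lm1 := by
    have hle := quad_le_lmax h1 hn u
    rw [hqu, huu] at hle
    nlinarith
  -- lm2 < lm1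
  obtain ⟨x2, hx21, _, hx23⟩ := lmax_eigenvec h2 hn
  have hx2sq : ∑ i, x2 i ^ 2 = 1 := by
    rw [← hx21]
    exact (Finset.sum_congr rfl fun i _ => (sq (x2 i)).symm).symm
  set Sd := ∑ i, d i * x2 i ^ 2 with hSd
  set Su := ∑ j, u j * x2 j with hSu
  have hq2 : lm2 = t ^ 2 * Sd + (1 - t ^ 2) * Su ^ 2 := by rw [hlm2, ← hx23, quadM]
  have hq1 : x2 ⬝ᵥ (Mmat d u t *ᵥ x2) = t * Sd + (1 - t) * Su ^ 2 := by rw [quadM]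
  have hq1le : t * Sd + (1 - t) * Su ^ 2 ≤ lm1 := by
    have := quad_le_lmax h1 hn x2
    rw [hq1, hx21, mul_one] at this
    exact this
  have hSule : Su ^ 2 ≤ c := by
    have := cs2 (u := u) x2
    rw [hx2sq, mul_one] at this
    calc Su ^ 2 ≤ ∑ i, u i ^ 2 := this
    _ = c := by rw [hc]; exact Finset.sum_congr rfl fun i _ => husq i
  have hlt : lm2 < lm1 := by
    have key : lm2 = t * (t * Sd + (1 - t) * Su ^ 2) + (1 - t) * Su ^ 2 := by
      rw [hq2]; ring
    nlinarith
  -- specRad = lmax for both (PSD)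
  have hpsd1 : ∀ x : Fin n → ℝ, 0 ≤ x ⬝ᵥ (Mmat d u t *ᵥ x) := by
    intro x
    rw [quadM]
    have h1' : 0 ≤ ∑ i, d i * x i ^ 2 :=
      Finset.sum_nonneg fun i _ => mul_nonneg (hd i).le (sq_nonneg _)
    have h2' := mul_nonneg ht0.le h1'
    have h3' := mul_nonneg (by linarith : (0:ℝ) ≤ 1 - t) (sq_nonneg (∑ j, u j * x j))
    linarith
  have hpsd2 : ∀ x : Fin n → ℝ, 0 ≤ x ⬝ᵥ (Mmat d u (t ^ 2) *ᵥ x) := by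
    intro x
    rw [quadM]
    have h1' : 0 ≤ ∑ i, d i * x i ^ 2 :=
      Finset.sum_nonneg fun i _ => mul_nonneg (hd i).le (sq_nonneg _)
    have ht2 : (0:ℝ) ≤ 1 - t ^ 2 := by nlinarith
    have h2' := mul_nonneg (sq_nonneg t) h1'
    have h3' := mul_nonneg ht2 (sq_nonneg (∑ j, u j * x j))
    linarith
  rw [specRad_of_psd h1 hn hpsd1, specRad_of_psd h2 hn hpsd2]
  exact hlt

/-- Case α > 1 : `specRad (M (-s)) < specRad (M s²)` for `s = α - 1 > 0`. -/
theorem case_neg (hn2 : 2 ≤ n) (s : ℝ) (hs0 : 0 < s)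
    (hv : ∀ i, 0 < v i) (hv1 : ∑ i, v i = 1) (hd : ∀ i, 0 < d i)
    (hu : ∀ i, u i = Real.sqrt (v i) * Real.sqrt (d i))
    (hsv : ∀ i, s ≤ (1 + s) * v i)
    (hdnc : ∃ i j, d i ≠ d j) :
    specRad (Mmat d u (-s)) < specRad (Mmat d u (s ^ 2)) := by
  have hn : 0 < n := by omega
  have h1 := Mmat_herm d u (-s)
  have h2 := Mmat_herm d u (s ^ 2)
  have husq : ∀ i, u i ^ 2 = v i * d i := usq (fun i => (hv i).le) (fun i => (hd i).le) hu
  have hupos : ∀ i, 0 < u i := by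
    intro i
    rw [hu i]
    exact mul_pos (Real.sqrt_pos.mpr (hv i)) (Real.sqrt_pos.mpr (hd i))
  -- s ≤ 1
  have hs1 : s ≤ 1 := by
    have i0 : Fin n := ⟨0, by omega⟩
    have i1 : Fin n := ⟨1, by omega⟩
    have hne : (⟨0, by omega⟩ : Fin n) ≠ (⟨1, by omega⟩ : Fin n) := by
      intro h
      exact absurd (congrArg Fin.val h) (by norm_num)
    have hsum2 : v ⟨0, by omega⟩ + v ⟨1, by omega⟩ ≤ 1 := by
      rw [← hv1]
      have := Finset.sum_le_sum_of_subset_of_nonneg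
        (Finset.subset_univ {(⟨0, by omega⟩ : Fin n), ⟨1, by omega⟩})
        (fun i _ _ => (hv i).le)
      rwa [Finset.sum_pair hne] at this
    have hmin : ∃ i, v i ≤ 1 / 2 := by
      by_contra hcon
      push_neg at hcon
      have := hcon ⟨0, by omega⟩
      have := hcon ⟨1, by omega⟩
      linarith
    obtain ⟨i, hi⟩ := hmin
    have := hsv i
    nlinarith [hv i]
  -- specRad (M (-s)) = lm1 via nonneg entries
  have hent : ∀ i j, 0 ≤ Mmat d u (-s) i j := by
    intro i j
    show 0 ≤ (if i = j then -s * d i else 0) + (1 - -s) * (u i * u j)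
    rcases eq_or_ne i j with h | h
    · subst h
      rw [if_pos rfl]
      have e : u i * u i = v i * d i := by rw [← husq i]; ring
      have := hsv i
      have := hd i
      nlinarith
    · rw [if_neg h]
      have := mul_pos (hupos i) (hupos j)
      nlinarith
  have hpsd2 : ∀ x : Fin n → ℝ, 0 ≤ x ⬝ᵥ (Mmat d u (s ^ 2) *ᵥ x) := by
    intro x
    rw [quadM]
    have h1' : 0 ≤ ∑ i, d i * x i ^ 2 :=
      Finset.sum_nonneg fun i _ => mul_nonneg (hd i).le (sq_nonneg _)
    have hs2 : (0:ℝ) ≤ 1 - s ^ 2 := by nlinarith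
    have h2' := mul_nonneg (sq_nonneg s) h1'
    have h3' := mul_nonneg hs2 (sq_nonneg (∑ j, u j * x j))
    linarith
  set lm1 := lmax hn h1 with hlm1
  set lm2 := lmax hn h2 with hlm2
  -- eigenvector for lm1
  obtain ⟨x1, hx11, hx12, hx13⟩ := lmax_eigenvec h1 hn
  have hx1sq : ∑ i, x1 i ^ 2 = 1 := by
    rw [← hx11]
    exact (Finset.sum_congr rfl fun i _ => (sq (x1 i)).symm).symm
  set Sd := ∑ i, d i * x1 i ^ 2 with hSd
  set Su := ∑ j, u j * x1 j with hSu
  have hq1 : lm1 = -s * Sd + (1 - -s) * Su ^ 2 := by rw [hlm1, ← hx13, quadM]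
  have hq2 : x1 ⬝ᵥ (Mmat d u (s ^ 2) *ᵥ x1) = s ^ 2 * Sd + (1 - s ^ 2) * Su ^ 2 := by
    rw [quadM]
  have hcs : Su ^ 2 ≤ Sd := cs1 (fun i => (hv i).le) hv1 (fun i => (hd i).le) hu x1
  -- lm1 ≤ lm2
  have hle12 : lm1 ≤ lm2 := by
    have hle := quad_le_lmax h2 hn x1
    rw [hq2, hx11, mul_one, ← hlm2] at hle
    nlinarith
  -- strict
  rcases lt_or_eq_of_le hle12 with hlt | heq
  · rw [specRad_of_nonneg_entries h1 hn hent, specRad_of_psd h2 hn hpsd2]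
    exact hlt
  · exfalso
    -- q2 x1 is squeezed : lm1 ≤ q2 x1 ≤ lm2 = lm1
    have hq2le : x1 ⬝ᵥ (Mmat d u (s ^ 2) *ᵥ x1) ≤ lm2 := by
      have hle := quad_le_lmax h2 hn x1
      rwa [hx11, mul_one, ← hlm2] at hle
    have hq2ge : lm1 ≤ x1 ⬝ᵥ (Mmat d u (s ^ 2) *ᵥ x1) := by
      rw [hq2]
      nlinarith
    have hq2eq : x1 ⬝ᵥ (Mmat d u (s ^ 2) *ᵥ x1) = lm2 * (x1 ⬝ᵥ x1) := by
      rw [hx11, mul_one]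
      exact le_antisymm hq2le (heq ▸ hq2ge)
    have hmax2 := quad_maximizer h2 hn x1 hq2eq
    -- componentwise equations
    have e1 : ∀ i, (-s) * d i * x1 i + (1 - -s) * Su * u i = lm1 * x1 i := by
      intro i
      have h := congrFun hx12 i
      rw [mulVecM] at h
      have h' : (lmax hn h1 • x1) i = lmax hn h1 * x1 i := rfl
      rw [h', ← hlm1] at h
      rw [← hSu] at h
      linear_combination h
    have e2 : ∀ i, s ^ 2 * d i * x1 i + (1 - s ^ 2) * Su * u i = lm1 * x1 i := by
      intro i
      have h := congrFun hmax2 i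
      rw [mulVecM] at h
      have h' : (lmax hn h2 • x1) i = lmax hn h2 * x1 i := rfl
      rw [h', ← hlm2] at h
      rw [← hSu] at h
      rw [← heq] at h
      linear_combination h
    have hss : s ^ 2 + s ≠ 0 := by positivity
    have hcomp : ∀ i, d i * x1 i = Su * u i := by
      intro i
      have hdiff : (s ^ 2 + s) * (d i * x1 i - Su * u i) = 0 := by
        linear_combination e2 i - e1 i
      have := (mul_eq_zero.mp hdiff).resolve_left hss
      exact sub_eq_zero.mp this
    have hSune : Su ≠ 0 := by
      intro h0
      have hx10 : ∀ i, x1 i = 0 := by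
        intro i
        have h := hcomp i
        rw [h0, zero_mul] at h
        exact (mul_eq_zero.mp h).resolve_left (hd i).ne'
      have hzero : ∑ i, x1 i ^ 2 = 0 :=
        Finset.sum_eq_zero fun i _ => by rw [hx10 i]; ring
      rw [hx1sq] at hzero
      norm_num at hzero
    have hkey : ∀ i, d i = lm1 := by
      intro i
      have hb : Su * u i = lm1 * x1 i := by
        linear_combination e1 i + s * hcomp i
      have hx1ne : x1 i ≠ 0 := by
        intro h0
        have h := hcomp i
        rw [h0, mul_zero] at h
        exact (mul_ne_zero hSune (hupos i).ne') h.symm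
      have : d i * x1 i = lm1 * x1 i := by rw [hcomp i, hb]
      have := mul_right_cancel₀ hx1ne this
      exact this
    obtain ⟨i, j, hij⟩ := hdnc
    exact hij (by rw [hkey i, hkey j])

end core

section pmat

def Pmat (v : Fin n → ℝ) (β : ℝ) : Matrix (Fin n) (Fin n) ℝ :=
  Matrix.of fun i j : Fin n => (1 - β) * (if i = j then (1:ℝ) else 0) + β * v i

def Wmat (v : Fin n → ℝ) : Matrix (Fin n) (Fin n) ℝ :=
  Matrix.of fun i _ : Fin n => v i

lemma Pmat_eq (v : Fin n → ℝ) (β : ℝ) :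
    Pmat v β = (1 - β) • (1 : Matrix (Fin n) (Fin n) ℝ) + β • Wmat v := by
  ext i j
  show (1 - β) * (if i = j then (1:ℝ) else 0) + β * v i
    = ((1 - β) • (1 : Matrix (Fin n) (Fin n) ℝ) + β • Wmat v) i j
  rw [Matrix.add_apply, Matrix.smul_apply, Matrix.smul_apply, Matrix.one_apply]
  show _ = (1 - β) * _ + β * v i
  rfl

lemma Wmat_mul_Wmat (v : Fin n → ℝ) (hv1 : ∑ i, v i = 1) :
    Wmat v * Wmat v = Wmat v := by
  ext i j
  show ∑ k, v i * v k = v i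
  rw [← Finset.mul_sum, hv1, mul_one]

lemma Pmat_mul_Pmat (v : Fin n → ℝ) (hv1 : ∑ i, v i = 1) (β : ℝ) :
    Pmat v β * Pmat v β = Pmat v (β * (2 - β)) := by
  rw [Pmat_eq, Pmat_eq]
  rw [add_mul, mul_add, mul_add]
  simp only [Matrix.smul_mul, Matrix.mul_smul, one_mul, mul_one, Wmat_mul_Wmat v hv1]
  module

end pmat

section conj

variable {v d u g : Fin n → ℝ}

noncomputable def diagUnit (g : Fin n → ℝ) (hg0 : ∀ i, g i ≠ 0) :
    (Matrix (Fin n) (Fin n) ℝ)ˣ where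
  val := Matrix.diagonal g
  inv := Matrix.diagonal fun i => (g i)⁻¹
  val_inv := by
    rw [Matrix.diagonal_mul_diagonal]
    have h : (fun i => g i * (g i)⁻¹) = fun _ => (1:ℝ) :=
      funext fun i => mul_inv_cancel₀ (hg0 i)
    rw [h, Matrix.diagonal_one]
  inv_val := by
    rw [Matrix.diagonal_mul_diagonal]
    have h : (fun i => (g i)⁻¹ * g i) = fun _ => (1:ℝ) :=
      funext fun i => inv_mul_cancel₀ (hg0 i)
    rw [h, Matrix.diagonal_one]

lemma conj_eq (hv : ∀ i, 0 < v i) (hd : ∀ i, 0 < d i)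
    (hu : ∀ i, u i = Real.sqrt (v i) * Real.sqrt (d i))
    (hg : ∀ i, g i = Real.sqrt (v i) / Real.sqrt (d i)) (β : ℝ) :
    Pmat v β * Matrix.diagonal d
      = Matrix.diagonal g * Mmat d u (1 - β) * Matrix.diagonal (fun i => (g i)⁻¹) := by
  have hsv : ∀ i, 0 < Real.sqrt (v i) := fun i => Real.sqrt_pos.mpr (hv i)
  have hsd : ∀ i, 0 < Real.sqrt (d i) := fun i => Real.sqrt_pos.mpr (hd i)
  have hg0 : ∀ i, g i ≠ 0 := fun i => by
    rw [hg i]; exact ne_of_gt (div_pos (hsv i) (hsd i))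
  have husq : ∀ i, u i * u i = v i * d i := fun i => by
    rw [hu i]
    have e1 := Real.mul_self_sqrt (hv i).le
    have e2 := Real.mul_self_sqrt (hd i).le
    linear_combination (Real.sqrt (d i) * Real.sqrt (d i)) * e1 + v i * e2
  have hgu : ∀ i, g i * u i = v i := fun i => by
    rw [hg i, hu i]
    rw [div_mul_eq_mul_div, mul_comm]
    rw [mul_assoc]
    rw [mul_comm (Real.sqrt (d i)) (Real.sqrt (v i)), ← mul_assoc]
    rw [mul_div_assoc, div_self (hsd i).ne', mul_one]
    exact Real.mul_self_sqrt (hv i).le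
  have hug : ∀ i, u i * (g i)⁻¹ = d i := fun i => by
    rw [hg i, hu i, inv_div]
    field_simp [(hsv i).ne', (hsd i).ne']
    linear_combination Real.mul_self_sqrt (hd i).le
  ext i j
  rw [Matrix.mul_diagonal, Matrix.mul_diagonal, Matrix.diagonal_mul]
  show ((1 - β) * (if i = j then (1:ℝ) else 0) + β * v i) * d j
    = g i * ((if i = j then (1 - β) * d i else 0) + (1 - (1 - β)) * (u i * u j)) * (g j)⁻¹
  rcases eq_or_ne i j with h | h
  · subst h
    rw [if_pos rfl, if_pos rfl]
    have hginv : g i * (g i)⁻¹ = 1 := mul_inv_cancel₀ (hg0 i)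
    linear_combination (-((1 - β) * d i + β * (u i * u i))) * hginv - β * husq i
  · rw [if_neg h, if_neg h]
    linear_combination (-β * (u j * (g j)⁻¹)) * hgu i + (-β * v i) * hug j

lemma specRad_conj (hv : ∀ i, 0 < v i) (hd : ∀ i, 0 < d i)
    (hu : ∀ i, u i = Real.sqrt (v i) * Real.sqrt (d i))
    (hg : ∀ i, g i = Real.sqrt (v i) / Real.sqrt (d i)) (β : ℝ) :
    specRad (Pmat v β * Matrix.diagonal d) = specRad (Mmat d u (1 - β)) := by
  have hsv : ∀ i, 0 < Real.sqrt (v i) := fun i => Real.sqrt_pos.mpr (hv i)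
  have hsd : ∀ i, 0 < Real.sqrt (d i) := fun i => Real.sqrt_pos.mpr (hd i)
  have hg0 : ∀ i, g i ≠ 0 := fun i => by
    rw [hg i]; exact ne_of_gt (div_pos (hsv i) (hsd i))
  have key : Pmat v β * Matrix.diagonal d
      = (diagUnit g hg0).val * Mmat d u (1 - β) * ((diagUnit g hg0)⁻¹).val :=
    conj_eq hv hd hu hg β
  unfold specRad
  rw [key, spectrum.units_conjugate]

end conj

end Stmt18Aux

open Stmt18Aux in
theorem stmt_18 {n : ℕ} (hn : 0 < n) (v : Fin n → ℝ)
    (hv : ∀ i, 0 < v i) (hv1 : ∑ i, v i = 1)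
    (α : ℝ) (hα : 0 < α) (hα' : ∀ i, α * (1 - v i) ≤ 1)
    (P : Matrix (Fin n) (Fin n) ℝ)
    (hP : P = Matrix.of fun i j : Fin n =>
        (1 - α) * (if i = j then (1:ℝ) else 0) + α * v i)
    (d : Fin n → ℝ) (hd : ∀ i, 0 < d i)
    (hdns : ∀ c : ℝ, Matrix.diagonal d ≠ c • (1 : Matrix (Fin n) (Fin n) ℝ)) :
    (specRad (P * P * Matrix.diagonal d) < specRad (P * Matrix.diagonal d) ↔
      1 + 1 / ((n : ℝ) - 1) < (n : ℝ) / ∑ i, (1 / (1 / (1 - P i i)))) ∧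
    (specRad (P * P * Matrix.diagonal d) = specRad (P * Matrix.diagonal d) ↔
      (n : ℝ) / ∑ i, (1 / (1 / (1 - P i i))) = 1 + 1 / ((n : ℝ) - 1)) ∧
    (specRad (P * Matrix.diagonal d) < specRad (P * P * Matrix.diagonal d) ↔
      1 ≤ (n : ℝ) / ∑ i, (1 / (1 / (1 - P i i))) ∧
      (n : ℝ) / ∑ i, (1 / (1 / (1 - P i i))) < 1 + 1 / ((n : ℝ) - 1)) := by
  -- d is nonconstant
  have hdnc : ∃ i j, d i ≠ d j := by
    by_contra hcon
    push_neg at hcon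
    apply hdns (d ⟨0, hn⟩)
    ext i j
    rw [Matrix.smul_apply, Matrix.one_apply, Matrix.diagonal_apply]
    rcases eq_or_ne i j with h | h
    · rw [if_pos h, if_pos h, smul_eq_mul, mul_one]
      exact hcon i ⟨0, hn⟩
    · rw [if_neg h, if_neg h, smul_eq_mul, mul_zero]
  have hn2 : 2 ≤ n := by
    by_contra hcon
    obtain ⟨i, j, hij⟩ := hdnc
    have hij' : i = j := by
      apply Fin.ext
      omega
    exact hij (congrArg d hij')
  have hN2 : (2:ℝ) ≤ (n:ℝ) := by exact_mod_cast hn2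
  have hN1 : (0:ℝ) < (n:ℝ) - 1 := by linarith
  -- the denominator sum
  have hS : (∑ i, (1 / (1 / (1 - P i i)))) = α * ((n:ℝ) - 1) := by
    have he : ∀ i : Fin n, 1 / (1 / (1 - P i i)) = α * 1 - α * v i := by
      intro i
      rw [one_div_one_div, hP]
      show 1 - ((1 - α) * (if i = i then (1:ℝ) else 0) + α * v i) = _
      rw [if_pos rfl]
      ring
    rw [Finset.sum_congr rfl fun i _ => he i, Finset.sum_sub_distrib,
      ← Finset.mul_sum, ← Finset.mul_sum, hv1, Finset.sum_const, Finset.card_univ,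
      Fintype.card_fin, nsmul_eq_mul]
    ring
  rw [hS]
  have hden : (0:ℝ) < α * ((n:ℝ) - 1) := mul_pos hα hN1
  have hαN : α * ((n:ℝ) - 1) ≤ (n:ℝ) := by
    have hsum : ∑ i : Fin n, α * (1 - v i) ≤ ∑ _i : Fin n, (1:ℝ) :=
      Finset.sum_le_sum fun i _ => hα' i
    have e1 : ∑ i : Fin n, α * (1 - v i) = α * ((n:ℝ) - 1) := by
      have : ∀ i : Fin n, α * (1 - v i) = α * 1 - α * v i := fun i => by ring
      rw [Finset.sum_congr rfl fun i _ => this i, Finset.sum_sub_distrib,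
        ← Finset.mul_sum, ← Finset.mul_sum, hv1, Finset.sum_const, Finset.card_univ,
        Fintype.card_fin, nsmul_eq_mul]
      ring
    have e2 : ∑ _i : Fin n, (1:ℝ) = (n:ℝ) := by
      rw [Finset.sum_const, Finset.card_univ, Fintype.card_fin, nsmul_eq_mul, mul_one]
    rw [e1, e2] at hsum
    exact hsum
  -- P as Pmat
  have hPmat : P = Pmat v α := hP
  have hPP : P * P = Pmat v (α * (2 - α)) := by
    rw [hPmat]
    exact Pmat_mul_Pmat v hv1 α
  -- conjugation
  have hu : ∀ i, (fun i => Real.sqrt (v i) * Real.sqrt (d i)) i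
      = Real.sqrt (v i) * Real.sqrt (d i) := fun i => rfl
  have hg : ∀ i, (fun i => Real.sqrt (v i) / Real.sqrt (d i)) i
      = Real.sqrt (v i) / Real.sqrt (d i) := fun i => rfl
  set uu : Fin n → ℝ := fun i => Real.sqrt (v i) * Real.sqrt (d i) with huu
  have hc1 : specRad (P * Matrix.diagonal d) = specRad (Mmat d uu (1 - α)) := by
    rw [hPmat]
    exact specRad_conj hv hd hu hg α
  have hc2 : specRad (P * P * Matrix.diagonal d)
      = specRad (Mmat d uu (1 - α * (2 - α))) := by
    rw [hPP]
    exact specRad_conj hv hd hu hg (α * (2 - α))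
  -- trichotomy of spectral radii
  have Tlt : α < 1 → specRad (P * P * Matrix.diagonal d) < specRad (P * Matrix.diagonal d) := by
    intro h
    rw [hc1, hc2]
    have e : 1 - α * (2 - α) = (1 - α) ^ 2 := by ring
    rw [e]
    exact case_pos hn (1 - α) (by linarith) (by linarith) hv hv1 hd hu hdnc
  have Teq : α = 1 → specRad (P * P * Matrix.diagonal d) = specRad (P * Matrix.diagonal d) := by
    intro h
    have : P * P = P := by
      rw [hPP, hPmat, h]
      norm_num
    rw [this]
  have Tgt : 1 < α → specRad (P * Matrix.diagonal d) < specRad (P * P * Matrix.diagonal d) := by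
    intro h
    rw [hc1, hc2]
    have e1 : 1 - α = -(α - 1) := by ring
    have e2 : 1 - α * (2 - α) = (α - 1) ^ 2 := by ring
    rw [e1, e2]
    apply case_neg hn2 (α - 1) (by linarith) hv hv1 hd hu _ hdnc
    intro i
    have := hα' i
    have hvi := hv i
    nlinarith
  -- numeric equivalences
  have hval : 1 + 1 / ((n:ℝ) - 1) = (n:ℝ) / ((n:ℝ) - 1) := by
    field_simp
    ring
  have hE1 : (1 + 1 / ((n:ℝ) - 1) < (n:ℝ) / (α * ((n:ℝ) - 1))) ↔ α < 1 := by
    rw [hval, div_lt_div_iff₀ hN1 hden]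
    constructor
    · intro h
      have hN0 : (0:ℝ) < (n:ℝ) := by linarith
      have h2 : α * ((n:ℝ) - 1) < (n:ℝ) - 1 := lt_of_mul_lt_mul_left h hN0.le
      nlinarith
    · intro h
      have hN0 : (0:ℝ) < (n:ℝ) := by linarith
      have h2 : α * ((n:ℝ) - 1) < (n:ℝ) - 1 := by nlinarith
      exact mul_lt_mul_of_pos_left h2 hN0
  have hE2 : ((n:ℝ) / (α * ((n:ℝ) - 1)) = 1 + 1 / ((n:ℝ) - 1)) ↔ α = 1 := by
    rw [hval, div_eq_div_iff hden.ne' hN1.ne']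
    constructor
    · intro h
      have hN0 : (0:ℝ) < (n:ℝ) := by linarith
      have h2 : (n:ℝ) - 1 = α * ((n:ℝ) - 1) := mul_left_cancel₀ hN0.ne' h
      have h3 : (α - 1) * ((n:ℝ) - 1) = 0 := by linear_combination -h2
      rcases mul_eq_zero.mp h3 with h4 | h4
      · linarith
      · exact absurd h4 hN1.ne'
    · intro h; rw [h]; ring
  have hE3 : (1:ℝ) ≤ (n:ℝ) / (α * ((n:ℝ) - 1)) := by
    rw [le_div_iff₀ hden, one_mul]
    exact hαN
  have hE4 : ((n:ℝ) / (α * ((n:ℝ) - 1)) < 1 + 1 / ((n:ℝ) - 1)) ↔ 1 < α := by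
    rw [hval, div_lt_div_iff₀ hden hN1]
    constructor
    · intro h
      have hN0 : (0:ℝ) < (n:ℝ) := by linarith
      have h2 : (n:ℝ) - 1 < α * ((n:ℝ) - 1) := lt_of_mul_lt_mul_left h hN0.le
      nlinarith
    · intro h
      have hN0 : (0:ℝ) < (n:ℝ) := by linarith
      have h2 : (n:ℝ) - 1 < α * ((n:ℝ) - 1) := by nlinarith
      exact mul_lt_mul_of_pos_left h2 hN0
  refine ⟨?_, ?_, ?_⟩
  · rw [hE1]
    constructor
    · intro h
      rcases lt_trichotomy α 1 with h' | h' | h'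
      · exact h'
      · exact absurd (Teq h') (ne_of_lt h)
      · exact absurd (Tgt h') (lt_asymm h)
    · exact Tlt
  · rw [hE2]
    constructor
    · intro h
      rcases lt_trichotomy α 1 with h' | h' | h'
      · exact absurd h (ne_of_lt (Tlt h'))
      · exact h'
      · exact absurd h.symm (ne_of_lt (Tgt h'))
    · exact Teq
  · rw [hE4]
    constructor
    · intro h
      refine ⟨hE3, ?_⟩
      rcases lt_trichotomy α 1 with h' | h' | h'
      · exact absurd h (lt_asymm (Tlt h'))
      · exact absurd (Teq h') (ne_of_gt h)
      · exact h'
    · rintro ⟨-, h⟩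
      exact Tgt h
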